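/- (Plotkin low-rate bound for Lee codes) If C ⊆ Z_q^n has M ≥ 2 codewords and minimum Lee distance d_L, then d_L ≤ n(q²−1)M/(4q(M−1)) if q is odd, and d_L ≤ nqM/(4(M−1)) if q is even. -/

import Mathlib

open Finset

/-- Lee distance between two symbols of `ZMod q` (representatives in `{0,…,q-1}`). -/
def leeDistSym (q : ℕ) (x y : ZMod q) : ℕ := min (x - y).val (y - x).val

/-- Lee distance between two vectors over `ZMod q`. -/
def leeDist {q n : ℕ} (x y : Fin n → ZMod q) : ℕ := ∑ i, leeDistSym q (x i) (y i)

/-- Lee weight of a symbol of `ZMod q`. -/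
def leeWtSym (q : ℕ) (x : ZMod q) : ℕ := min x.val (q - x.val)

/-- Lee weight of a vector over `ZMod q`. -/
def leeWt {q n : ℕ} (x : Fin n → ZMod q) : ℕ := ∑ i, leeWtSym q (x i)

lemma count_aux (q h t : ℕ) (hh : 2*h ≤ q) (hh2 : q ≤ 2*h+1) (ht : t < q) :
    ((Finset.range q).filter
      (fun v => ¬((v < h) ↔ ((v + t) % q < h)))).card = 2 * min t (q - t) := by
  have hmod : ∀ v < q, (v + t) % q = if v + t < q then v + t else v + t - q := by
    intro v hv
    split
    · exact Nat.mod_eq_of_lt ‹_›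
    · rw [Nat.mod_eq_sub_mod (by omega), Nat.mod_eq_of_lt (by omega)]
  rcases le_or_gt (2*t) q with hc | hc
  · have hset : (Finset.range q).filter (fun v => ¬((v < h) ↔ ((v + t) % q < h)))
        = Finset.Ico (h - t) h ∪ Finset.Ico (q - t) q := by
      ext v
      simp only [mem_filter, mem_range, mem_union, mem_Ico]
      constructor
      · rintro ⟨hv, hp⟩
        rw [hmod v hv] at hp
        split at hp <;> omega
      · intro hv
        have hvq : v < q := by omega
        refine ⟨hvq, ?_⟩
        rw [hmod v hvq]
        split <;> omega
    rw [hset, card_union_of_disjoint, Nat.card_Ico, Nat.card_Ico]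
    · omega
    · rw [Finset.disjoint_left]
      intro a ha hb
      simp only [mem_Ico] at ha hb
      omega
  · have hset : (Finset.range q).filter (fun v => ¬((v < h) ↔ ((v + t) % q < h)))
        = Finset.Ico 0 (q - t) ∪ Finset.Ico h (h + (q - t)) := by
      ext v
      simp only [mem_filter, mem_range, mem_union, mem_Ico]
      constructor
      · rintro ⟨hv, hp⟩
        rw [hmod v hv] at hp
        split at hp <;> omega
      · intro hv
        have hvq : v < q := by omega
        refine ⟨hvq, ?_⟩
        rw [hmod v hvq]
        split <;> omega
    rw [hset, card_union_of_disjoint, Nat.card_Ico, Nat.card_Ico]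
    · omega
    · rw [Finset.disjoint_left]
      intro a ha hb
      simp only [mem_Ico] at ha hb
      omega

lemma sum_val_zmod (q : ℕ) [NeZero q] (f : ℕ → ℕ) :
    ∑ u : ZMod q, f u.val = ∑ v ∈ Finset.range q, f v := by
  apply Finset.sum_nbij' (i := ZMod.val) (j := fun v => (v : ZMod q))
  · intro a _; exact Finset.mem_range.2 (ZMod.val_lt a)
  · intro a _; exact Finset.mem_univ _
  · intro a _; exact ZMod.natCast_rightInverse a
  · intro a ha; exact ZMod.val_cast_of_lt (Finset.mem_range.1 ha)
  · intro a _; rfl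

lemma colsum_eq (q : ℕ) [NeZero q] (s : ZMod q) :
    (∑ u : ZMod q, if ¬((u.val < q/2) ↔ ((u + s).val < q/2)) then 1 else 0)
      = 2 * min s.val (q - s.val) := by
  have h1 : ∀ u : ZMod q, (u + s).val = (u.val + s.val) % q := fun u => ZMod.val_add u s
  calc (∑ u : ZMod q, if ¬((u.val < q/2) ↔ ((u + s).val < q/2)) then 1 else 0)
      = ∑ u : ZMod q,
          (fun v => if ¬((v < q/2) ↔ ((v + s.val) % q < q/2)) then 1 else 0) u.val := by
        refine Finset.sum_congr rfl fun u _ => ?_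
        rw [h1]
    _ = ∑ v ∈ Finset.range q, if ¬((v < q/2) ↔ ((v + s.val) % q < q/2)) then 1 else 0 :=
        sum_val_zmod q (fun v => if ¬((v < q/2) ↔ ((v + s.val) % q < q/2)) then 1 else 0)
    _ = ((Finset.range q).filter (fun v => ¬((v < q/2) ↔ ((v + s.val) % q < q/2)))).card := by
        rw [Finset.card_filter]
    _ = 2 * min s.val (q - s.val) :=
        count_aux q (q/2) s.val (by omega) (by omega) (ZMod.val_lt s)

lemma distsym_eq (q : ℕ) [NeZero q] (a b : ZMod q) :
    leeDistSym q a b = min (b - a).val (q - (b - a).val) := by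
  unfold leeDistSym
  have h1 : a - b = -(b - a) := by ring
  rw [h1, ZMod.neg_val']
  have h2 : (b - a).val < q := ZMod.val_lt _
  rcases Nat.eq_zero_or_pos (b - a).val with h | h
  · simp [h]
  · rw [Nat.mod_eq_of_lt (by omega)]; omega

lemma lemA (q : ℕ) [NeZero q] (a b : ZMod q) :
    2 * leeDistSym q a b
      = ∑ c : ZMod q, if ¬(((a - c).val < q/2) ↔ ((b - c).val < q/2)) then 1 else 0 := by
  have hcomp := Equiv.sum_comp (Equiv.subLeft a)
      (fun c : ZMod q => if ¬(((a - c).val < q/2) ↔ ((b - c).val < q/2)) then 1 else 0)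
  rw [← hcomp]
  simp only [Equiv.subLeft_apply, sub_sub_cancel]
  have hrw : ∀ u : ZMod q, b - (a - u) = u + (b - a) := fun u => by ring
  calc 2 * leeDistSym q a b = 2 * min (b - a).val (q - (b - a).val) := by rw [distsym_eq]
    _ = ∑ u : ZMod q, if ¬((u.val < q/2) ↔ ((u + (b - a)).val < q/2)) then 1 else 0 :=
        (colsum_eq q (b - a)).symm
    _ = _ := by
        refine Finset.sum_congr rfl fun u _ => ?_
        rw [hrw]

lemma lemB {α : Type*} (s : Finset α) (p : α → Prop) [DecidablePred p] :
    (∑ x ∈ s, ∑ y ∈ s, if ¬(p x ↔ p y) then 1 else 0)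
      = 2 * ((s.filter p).card * (s.card - (s.filter p).card)) := by
  set k := (s.filter p).card with hk
  have hksum : (s.filter p).card + (s.filter (fun x => ¬ p x)).card = s.card :=
    Finset.card_filter_add_card_filter_not p
  have hinner : ∀ x ∈ s, (∑ y ∈ s, if ¬(p x ↔ p y) then 1 else 0)
      = if p x then s.card - k else k := by
    intro x _
    rw [← Finset.card_filter]
    by_cases hx : p x
    · have heq : s.filter (fun y => ¬(p x ↔ p y)) = s.filter (fun x => ¬ p x) :=
        Finset.filter_congr fun y _ => by simp [hx]
      rw [heq, if_pos hx]; omega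
    · have heq : s.filter (fun y => ¬(p x ↔ p y)) = s.filter p :=
        Finset.filter_congr fun y _ => by simp [hx]
      rw [heq, if_neg hx]
  rw [Finset.sum_congr rfl hinner, Finset.sum_ite, Finset.sum_const, Finset.sum_const,
    smul_eq_mul, smul_eq_mul, ← hk]
  have h2 : (s.filter (fun x => ¬ p x)).card = s.card - k := by omega
  rw [h2]
  rw [mul_comm (s.card - k) k]; ring

lemma lemC (q : ℕ) [NeZero q] (a : ZMod q) :
    (∑ c : ZMod q, if (a - c).val < q/2 then 1 else 0) = q/2 := by
  have hcomp := Equiv.sum_comp (Equiv.subLeft a)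
      (fun c : ZMod q => if (a - c).val < q/2 then 1 else 0)
  rw [← hcomp]
  simp only [Equiv.subLeft_apply, sub_sub_cancel]
  rw [sum_val_zmod q (fun v => if v < q/2 then 1 else 0), ← Finset.card_filter]
  have hr : (Finset.range q).filter (fun v => v < q/2) = Finset.range (q/2) := by
    ext v
    simp only [Finset.mem_filter, Finset.mem_range]
    omega
  rw [hr, Finset.card_range]

theorem plotkin_low_rate_bound_lee (q n : ℕ) (hq : 2 ≤ q)
    (C : Finset (Fin n → ZMod q)) (M d : ℕ) (hM : C.card = M) (hM2 : 2 ≤ M)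
    (hd : ∀ x ∈ C, ∀ y ∈ C, x ≠ y → d ≤ leeDist x y) :
    (Odd q → (d : ℚ) ≤ (n : ℚ) * ((q : ℚ) ^ 2 - 1) * M / (4 * q * ((M : ℚ) - 1))) ∧
    (Even q → (d : ℚ) ≤ (n : ℚ) * q * M / (4 * ((M : ℚ) - 1))) := by
  haveI : NeZero q := ⟨by omega⟩
  classical
  set K : Fin n → ZMod q → ℕ :=
    fun i c => (C.filter (fun x => ((x i) - c).val < q/2)).card with hKdef
  -- column sums
  have hKsum : ∀ i : Fin n, ∑ c : ZMod q, K i c = (q/2) * M := by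
    intro i
    calc ∑ c : ZMod q, K i c
        = ∑ c : ZMod q, ∑ x ∈ C, if ((x i) - c).val < q/2 then 1 else 0 :=
          Finset.sum_congr rfl (fun c _ => Finset.card_filter _ _)
      _ = ∑ x ∈ C, ∑ c : ZMod q, if ((x i) - c).val < q/2 then 1 else 0 := Finset.sum_comm
      _ = ∑ _x ∈ C, (q/2) := Finset.sum_congr rfl (fun x _ => lemC q (x i))
      _ = (q/2) * M := by rw [Finset.sum_const, smul_eq_mul, hM, mul_comm]
  have hKle : ∀ i c, K i c ≤ M := fun i c => hM ▸ (Finset.card_filter_le _ _)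
  -- step 1: per-coordinate double sum
  have hstep1 : ∀ i : Fin n, (∑ x ∈ C, ∑ y ∈ C, 2 * leeDistSym q (x i) (y i))
      = ∑ c : ZMod q, 2 * (K i c * (M - K i c)) := by
    intro i
    calc (∑ x ∈ C, ∑ y ∈ C, 2 * leeDistSym q (x i) (y i))
        = ∑ x ∈ C, ∑ y ∈ C, ∑ c : ZMod q,
            (if ¬((((x i) - c).val < q/2) ↔ (((y i) - c).val < q/2)) then 1 else 0) :=
          Finset.sum_congr rfl fun x _ => Finset.sum_congr rfl fun y _ => lemA q (x i) (y i)
      _ = ∑ x ∈ C, ∑ c : ZMod q, ∑ y ∈ C,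
            (if ¬((((x i) - c).val < q/2) ↔ (((y i) - c).val < q/2)) then 1 else 0) :=
          Finset.sum_congr rfl fun x _ => Finset.sum_comm
      _ = ∑ c : ZMod q, ∑ x ∈ C, ∑ y ∈ C,
            (if ¬((((x i) - c).val < q/2) ↔ (((y i) - c).val < q/2)) then 1 else 0) :=
          Finset.sum_comm
      _ = ∑ c : ZMod q, 2 * (K i c * (M - K i c)) := by
          refine Finset.sum_congr rfl fun c _ => ?_
          rw [lemB C (fun x => ((x i) - c).val < q/2), hM]
  -- total double sum identity
  have hS1 : 2 * (∑ x ∈ C, ∑ y ∈ C, leeDist x y)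
      = ∑ i : Fin n, ∑ c : ZMod q, 2 * (K i c * (M - K i c)) := by
    calc 2 * (∑ x ∈ C, ∑ y ∈ C, leeDist x y)
        = ∑ x ∈ C, ∑ y ∈ C, ∑ i : Fin n, 2 * leeDistSym q (x i) (y i) := by
          rw [Finset.mul_sum]
          refine Finset.sum_congr rfl fun x _ => ?_
          rw [Finset.mul_sum]
          refine Finset.sum_congr rfl fun y _ => ?_
          unfold leeDist
          rw [Finset.mul_sum]
      _ = ∑ x ∈ C, ∑ i : Fin n, ∑ y ∈ C, 2 * leeDistSym q (x i) (y i) :=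
          Finset.sum_congr rfl fun x _ => Finset.sum_comm
      _ = ∑ i : Fin n, ∑ x ∈ C, ∑ y ∈ C, 2 * leeDistSym q (x i) (y i) := Finset.sum_comm
      _ = ∑ i : Fin n, ∑ c : ZMod q, 2 * (K i c * (M - K i c)) :=
          Finset.sum_congr rfl fun i _ => hstep1 i
  -- lower bound on the double sum
  have hlow : d * (M * (M - 1)) ≤ ∑ x ∈ C, ∑ y ∈ C, leeDist x y := by
    have h1 : ∀ x ∈ C, (M - 1) * d ≤ ∑ y ∈ C, leeDist x y := by
      intro x hx
      calc (M - 1) * d = ∑ _y ∈ C.erase x, d := by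
            rw [Finset.sum_const, smul_eq_mul, Finset.card_erase_of_mem hx, hM]
        _ ≤ ∑ y ∈ C.erase x, leeDist x y :=
            Finset.sum_le_sum fun y hy =>
              hd x hx y (Finset.mem_of_mem_erase hy) (Ne.symm (Finset.ne_of_mem_erase hy))
        _ ≤ ∑ y ∈ C, leeDist x y :=
            Finset.sum_le_sum_of_subset (Finset.erase_subset x C)
    calc d * (M * (M - 1)) = ∑ _x ∈ C, (M - 1) * d := by
          rw [Finset.sum_const, smul_eq_mul, hM]; ring
      _ ≤ _ := Finset.sum_le_sum h1
  -- rational versions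
  have hMcast : (2:ℚ) ≤ (M:ℚ) := by exact_mod_cast hM2
  have hqcast : (2:ℚ) ≤ (q:ℚ) := by exact_mod_cast hq
  have hM0 : (0:ℚ) < (M:ℚ) := by linarith
  have hq0 : (0:ℚ) < (q:ℚ) := by linarith
  -- Cauchy-Schwarz per coordinate
  have hcs : ∀ i : Fin n, (q:ℚ) * ∑ c : ZMod q, (K i c : ℚ) * ((M:ℚ) - K i c)
      ≤ ((q/2 : ℕ) : ℚ) * ((q:ℚ) - ((q/2 : ℕ) : ℚ)) * (M:ℚ)^2 := by
    intro i
    have hsum : ∑ c : ZMod q, (K i c : ℚ) = ((q/2 : ℕ) : ℚ) * (M:ℚ) := by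
      rw [← Nat.cast_sum, hKsum i, Nat.cast_mul]
    have hcs0 : (∑ c : ZMod q, (K i c : ℚ))^2 ≤ (q:ℚ) * ∑ c : ZMod q, (K i c : ℚ)^2 := by
      have h := sq_sum_le_card_mul_sum_sq (s := (Finset.univ : Finset (ZMod q)))
        (f := fun c : ZMod q => (K i c : ℚ))
      simpa [Finset.card_univ, ZMod.card] using h
    have hexp : ∑ c : ZMod q, (K i c : ℚ) * ((M:ℚ) - K i c)
        = (M:ℚ) * (∑ c : ZMod q, (K i c : ℚ)) - ∑ c : ZMod q, (K i c : ℚ)^2 := by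
      rw [Finset.mul_sum, ← Finset.sum_sub_distrib]
      exact Finset.sum_congr rfl fun c _ => by ring
    rw [hexp, hsum]
    rw [hsum] at hcs0
    nlinarith [hcs0]
  -- cast of hS1
  have hS1Q : 2 * (∑ x ∈ C, ∑ y ∈ C, (leeDist x y : ℚ))
      = ∑ i : Fin n, ∑ c : ZMod q, 2 * ((K i c : ℚ) * ((M:ℚ) - K i c)) := by
    have := congrArg (fun m : ℕ => (m : ℚ)) hS1
    push_cast at this
    rw [this]
    refine Finset.sum_congr rfl fun i _ => Finset.sum_congr rfl fun c _ => ?_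
    rw [Nat.cast_sub (hKle i c)]
  -- combine to key inequality
  have hkey : (q:ℚ) * ((d:ℚ) * ((M:ℚ) * ((M:ℚ) - 1)))
      ≤ (n:ℚ) * (((q/2 : ℕ) : ℚ) * ((q:ℚ) - ((q/2 : ℕ) : ℚ)) * (M:ℚ)^2) := by
    have hlowQ : (d:ℚ) * ((M:ℚ) * ((M:ℚ) - 1)) ≤ ∑ x ∈ C, ∑ y ∈ C, (leeDist x y : ℚ) := by
      have h1M : 1 ≤ M := by omega
      have hc := (Nat.cast_le (α := ℚ)).2 hlow
      push_cast [Nat.cast_sub h1M] at hc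
      exact hc
    have hup : (q:ℚ) * (2 * (∑ x ∈ C, ∑ y ∈ C, (leeDist x y : ℚ)))
        ≤ (n:ℚ) * (2 * (((q/2 : ℕ) : ℚ) * ((q:ℚ) - ((q/2 : ℕ) : ℚ)) * (M:ℚ)^2)) := by
      rw [hS1Q, Finset.mul_sum]
      calc ∑ i : Fin n, (q:ℚ) * ∑ c : ZMod q, 2 * ((K i c : ℚ) * ((M:ℚ) - K i c))
          ≤ ∑ _i : Fin n, 2 * (((q/2 : ℕ) : ℚ) * ((q:ℚ) - ((q/2 : ℕ) : ℚ)) * (M:ℚ)^2) := by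
            refine Finset.sum_le_sum fun i _ => ?_
            have h := hcs i
            calc (q:ℚ) * ∑ c : ZMod q, 2 * ((K i c : ℚ) * ((M:ℚ) - K i c))
                = 2 * ((q:ℚ) * ∑ c : ZMod q, (K i c : ℚ) * ((M:ℚ) - K i c)) := by
                  rw [Finset.mul_sum, Finset.mul_sum, Finset.mul_sum]
                  exact Finset.sum_congr rfl fun c _ => by ring
              _ ≤ _ := by linarith
        _ = (n:ℚ) * (2 * (((q/2 : ℕ) : ℚ) * ((q:ℚ) - ((q/2 : ℕ) : ℚ)) * (M:ℚ)^2)) := by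
            rw [Finset.sum_const, Finset.card_univ, Fintype.card_fin, nsmul_eq_mul]
    nlinarith [mul_le_mul_of_nonneg_left hlowQ (le_of_lt hq0), hup]
  -- finish: parity cases
  have hMm1 : (0:ℚ) < (M:ℚ) - 1 := by linarith
  constructor
  · intro hodd
    have h2h : 2 * (q / 2) + 1 = q := by
      obtain ⟨m, hm⟩ := hodd; omega
    have hhQ : ((q/2 : ℕ) : ℚ) = ((q:ℚ) - 1) / 2 := by
      have := congrArg (fun m : ℕ => (m : ℚ)) h2h
      push_cast at this
      linarith
    rw [hhQ] at hkey
    rw [le_div_iff₀ (mul_pos (by positivity : (0:ℚ) < 4 * (q:ℚ)) hMm1)]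
    rw [← mul_le_mul_iff_of_pos_right hM0]
    nlinarith [hkey]
  · intro heven
    have h2h : 2 * (q / 2) = q := by
      obtain ⟨m, hm⟩ := heven; omega
    have hhQ : ((q/2 : ℕ) : ℚ) = (q:ℚ) / 2 := by
      have := congrArg (fun m : ℕ => (m : ℚ)) h2h
      push_cast at this
      linarith
    rw [hhQ] at hkey
    rw [le_div_iff₀ (mul_pos (by norm_num : (0:ℚ) < 4) hMm1)]
    rw [← mul_le_mul_iff_of_pos_right (mul_pos hq0 hM0)]
    nlinarith [hkey]
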